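/- If H is a subgroup of index 2 in G and M is any right transversal to H, then the induced binary operation [·,·] makes M a group. -/

import Mathlib

/-- if H has index 2, the induced operation Ξ makes any right
transversal M a group. -/
theorem index_two_transversal_group
    {G : Type*} [Group G] (H : Subgroup G) (hI : H.index = 2) (M : Set G)
    (hT : ∀ x : G, ∃! p : H × M, (p.1 : G) * (p.2 : G) = x)
    (Ξ : M → M → M) (Λ : M → M → H)
    (hF2 : ∀ (a b : M), (a : G) * (b : G) = (Λ a b : G) * (Ξ a b : G)) :
    ∃ grp : Group M, grp.mul = Ξ := by
  haveI hN : H.Normal := by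
    constructor
    intro n hn g
    rw [Subgroup.mul_mem_iff_of_index_two hI, Subgroup.mul_mem_iff_of_index_two hI,
      H.inv_mem_iff]
    tauto
  -- the map M → G ⧸ H is a bijection
  set f : M → G ⧸ H := fun m => QuotientGroup.mk (m : G) with hf
  have hinj : Function.Injective f := by
    intro a b hab
    have h1 : (a : G)⁻¹ * b ∈ H := (QuotientGroup.eq (s := H)).mp hab
    have h2 : (b : G) * (a : G)⁻¹ ∈ H := by
      have := hN.conj_mem _ h1 (a : G)
      simpa [mul_assoc] using this
    have hu := hT (b : G)
    have e1 : ((⟨(b : G) * (a : G)⁻¹, h2⟩, a) : H × M).1.1 * ((⟨(b : G) * (a : G)⁻¹, h2⟩, a) : H × M).2.1 = (b : G) := by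
      simp
    have e2 : ((1, b) : H × M).1.1 * ((1, b) : H × M).2.1 = (b : G) := by simp
    have := (hu.unique e1 e2)
    have : (a : M) = b := congrArg Prod.snd this
    exact this
  have hsurj : Function.Surjective f := by
    intro q
    obtain ⟨x, rfl⟩ := QuotientGroup.mk_surjective q
    obtain ⟨⟨h, m⟩, hp, -⟩ := hT x
    refine ⟨m, ?_⟩
    rw [hf]
    refine (QuotientGroup.eq (s := H)).mpr ?_
    have : (m : G)⁻¹ * x = (m : G)⁻¹ * h * (m : G) := by
      rw [← hp]; group
    rw [this]
    simpa using hN.conj_mem _ h.2 (m : G)⁻¹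
  let e : M ≃ G ⧸ H := Equiv.ofBijective f ⟨hinj, hsurj⟩
  refine ⟨e.group, ?_⟩
  funext a b
  show e.symm (e a * e b) = Ξ a b
  apply hinj
  have : f (e.symm (e a * e b)) = e a * e b := e.apply_symm_apply _
  rw [show f (e.symm (e a * e b)) = e (e.symm (e a * e b)) from rfl, e.apply_symm_apply]
  show (QuotientGroup.mk (a : G)) * (QuotientGroup.mk (b : G)) = f (Ξ a b)
  rw [← QuotientGroup.mk_mul]
  refine (QuotientGroup.eq (s := H)).mpr ?_
  have h2 := hF2 a b
  have : ((a : G) * b)⁻¹ * (Ξ a b : G) = ((a:G)*b)⁻¹ * (Λ a b : G)⁻¹ * ((a:G)*b) := by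
    rw [mul_assoc]
    congr 1
    rw [h2]; group
  rw [this]
  simpa using hN.conj_mem _ (H.inv_mem (Λ a b).2) ((a:G)*b)⁻¹
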